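/- The commutator word [g₁,g₂] is a weak identity of height 2 in a nonabelian free group F: for any homomorphism ρ : F × F → F, either ρ maps the commutator of the two generators of the first factor to the identity, or ρ maps the commutator of the two generators of the second factor to the identity. -/

import Mathlib

private lemma reduce_cons_eq {β : Type*} [DecidableEq β] {x : β × Bool} {L : List (β × Bool)}
    (hL : FreeGroup.reduce L = L)
    (hx : ∀ y ∈ L.head?, ¬(x.1 = y.1 ∧ x.2 = !y.2)) :
    FreeGroup.reduce (x :: L) = x :: L := by
  rw [FreeGroup.reduce.cons, hL]
  cases L with
  | nil => rfl
  | cons y t =>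
    have h := hx y (by simp)
    simp only [List.casesOn]
    rw [if_neg h]

private lemma reduce_concat_eq {β : Type*} [DecidableEq β] {x : β × Bool} {L : List (β × Bool)}
    (hL : FreeGroup.reduce L = L)
    (hx : ∀ y ∈ L.getLast?, ¬(x.1 = y.1 ∧ x.2 = !y.2)) :
    FreeGroup.reduce (L ++ [x]) = L ++ [x] := by
  have h1 : FreeGroup.invRev (L ++ [x]) = (x.1, !x.2) :: FreeGroup.invRev L := by
    simp [FreeGroup.invRev]
  have h2 : FreeGroup.reduce (FreeGroup.invRev L) = FreeGroup.invRev L := by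
    rw [FreeGroup.reduce_invRev, hL]
  have hhead : ∀ y ∈ (FreeGroup.invRev L).head?, ¬((x.1, !x.2).1 = y.1 ∧ (x.1, !x.2).2 = !y.2) := by
    intro y hy
    have : (FreeGroup.invRev L).head? = (L.getLast?).map (fun g => (g.1, !g.2)) := by
      simp [FreeGroup.invRev, List.head?_reverse, List.getLast?_map]
    rw [this, Option.mem_def, Option.map_eq_some_iff] at hy
    obtain ⟨z, hz, rfl⟩ := hy
    have := hx z hz
    simpa using this
  have h3 : FreeGroup.reduce (FreeGroup.invRev (L ++ [x])) = FreeGroup.invRev (L ++ [x]) := by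
    rw [h1]
    exact reduce_cons_eq h2 hhead
  have := FreeGroup.reduce_invRev (w := L ++ [x])
  rw [h3] at this
  exact FreeGroup.invRev_injective this.symm

private lemma head_eq_of_central {β : Type*} [DecidableEq β] {z : FreeGroup β}
    (hz : ∀ g : FreeGroup β, z * g = g * z) (hne : z.toWord ≠ [])
    (x : β × Bool)
    (hxp : ∀ y ∈ z.toWord.head?, ¬(x.1 = y.1 ∧ x.2 = !y.2))
    (hxq : ∀ y ∈ z.toWord.getLast?, ¬(x.1 = y.1 ∧ x.2 = !y.2)) :
    z.toWord.head? = some x := by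
  have hL : FreeGroup.reduce z.toWord = z.toWord := FreeGroup.reduce_toWord z
  have hzm : z = FreeGroup.mk z.toWord := FreeGroup.mk_toWord.symm
  have e1 : (FreeGroup.mk [x] * z).toWord = x :: z.toWord := by
    conv_lhs => rw [hzm]
    rw [FreeGroup.mul_mk, FreeGroup.toWord_mk]
    exact reduce_cons_eq hL hxp
  have e2 : (z * FreeGroup.mk [x]).toWord = z.toWord ++ [x] := by
    conv_lhs => rw [hzm]
    rw [FreeGroup.mul_mk, FreeGroup.toWord_mk]
    exact reduce_concat_eq hL hxq
  have e3 : x :: z.toWord = z.toWord ++ [x] := by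
    rw [← e1, ← e2, hz]
  cases hc : z.toWord with
  | nil => exact absurd hc hne
  | cons a t =>
    rw [hc] at e3
    have : x = a := by
      have := congrArg List.head? e3
      simpa using this
    simp [this]

private lemma exists_two_good {β : Type*} {u v : β} (huv : u ≠ v) (p q : β × Bool) :
    ∃ a b : β × Bool, a ≠ b ∧ a ≠ p ∧ a ≠ q ∧ b ≠ p ∧ b ≠ q := by
  classical
  set s : Finset (β × Bool) := ({u, v} : Finset β) ×ˢ (Finset.univ : Finset Bool) with hs
  have hcard : s.card = 4 := by
    rw [hs, Finset.card_product]
    rw [Finset.card_insert_of_notMem (by simpa using huv), Finset.card_singleton]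
    simp
  have h2 : 2 ≤ (s \ {p, q}).card := by
    have h1 := Finset.le_card_sdiff ({p, q} : Finset (β × Bool)) s
    have : ({p, q} : Finset (β × Bool)).card ≤ 2 := Finset.card_insert_le _ _ |>.trans (by simp)
    omega
  obtain ⟨a, ha, b, hb, hab⟩ := Finset.one_lt_card.mp (show 1 < (s \ {p, q}).card by omega)
  rw [Finset.mem_sdiff, Finset.mem_insert, Finset.mem_singleton] at ha hb
  push_neg at ha hb
  exact ⟨a, b, hab, ha.2.1, ha.2.2, hb.2.1, hb.2.2⟩

private lemma central_eq_one {β : Type*} {u v : β} (huv : u ≠ v) {z : FreeGroup β}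
    (hz : ∀ g : FreeGroup β, z * g = g * z) : z = 1 := by
  classical
  by_contra h
  have hne : z.toWord ≠ [] := fun hh => h (FreeGroup.toWord_eq_nil_iff.mp hh)
  obtain ⟨p, hp⟩ : ∃ p, z.toWord.head? = some p := by
    cases hc : z.toWord with
    | nil => exact absurd hc hne
    | cons a t => exact ⟨a, by simp⟩
  obtain ⟨q, hq⟩ : ∃ q, z.toWord.getLast? = some q := by
    cases hc : z.toWord.getLast? with
    | none => exact absurd (List.getLast?_eq_none_iff.mp hc) hne
    | some a => exact ⟨a, rfl⟩
  obtain ⟨a, b, hab, hap, haq, hbp, hbq⟩ := exists_two_good huv (p.1, !p.2) (q.1, !q.2)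
  have key : ∀ x : β × Bool, x ≠ (p.1, !p.2) → x ≠ (q.1, !q.2) → z.toWord.head? = some x := by
    intro x h1 h2
    apply head_eq_of_central hz hne x
    · intro y hy
      rw [hp, Option.mem_some_iff] at hy
      subst hy
      rintro ⟨e1, e2⟩
      exact h1 (Prod.ext e1 e2)
    · intro y hy
      rw [hq, Option.mem_def, Option.some_inj] at hy
      subst hy
      rintro ⟨e1, e2⟩
      exact h2 (Prod.ext e1 e2)
  have ka := key a hap haq
  have kb := key b hbp hbq
  rw [kb, Option.some_inj] at ka
  
  exact hab ka.symm

private lemma freeGroup_commute_of_subsingleton {β : Type*} [Subsingleton β]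
    (a b : FreeGroup β) : a * b = b * a := by
  induction a with
  | C1 => simp
  | of x =>
    induction b with
    | C1 => simp
    | of y => rw [Subsingleton.elim x y]
    | inv_of y ih => exact (Commute.inv_right ih)
    | mul y z ih1 ih2 => exact (Commute.mul_right ih1 ih2)
  | inv_of x ih => exact (Commute.inv_left ih)
  | mul x y ih1 ih2 => exact (Commute.mul_left ih1 ih2)

private lemma isFreeGroup_abelian_of_central {G : Type*} [Group G] [IsFreeGroup G]
    {z : G} (hz1 : z ≠ 1) (hz : ∀ g : G, z * g = g * z) (a b : G) : a * b = b * a := by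
  let e : G ≃* FreeGroup (IsFreeGroup.Generators G) := IsFreeGroup.toFreeGroup G
  by_cases h : ∃ u v : IsFreeGroup.Generators G, u ≠ v
  · obtain ⟨u, v, huv⟩ := h
    exfalso
    apply hz1
    have hc : ∀ g : FreeGroup (IsFreeGroup.Generators G), e z * g = g * e z := by
      intro g
      have := hz (e.symm g)
      calc e z * g = e (z * e.symm g) := by rw [map_mul, e.apply_symm_apply]
        _ = e (e.symm g * z) := by rw [this]
        _ = g * e z := by rw [map_mul, e.apply_symm_apply]
    have := central_eq_one huv hc
    have : e z = e 1 := by rw [this, map_one]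
    exact e.injective this
  · push_neg at h
    have : Subsingleton (IsFreeGroup.Generators G) := ⟨h⟩
    have hc := freeGroup_commute_of_subsingleton (e a) (e b)
    apply e.injective
    rw [map_mul, map_mul, hc]

private lemma freeGroup_comm_trans {α : Type*} {a b c : FreeGroup α} (ha : a ≠ 1)
    (hab : a * b = b * a) (hac : a * c = c * a) : b * c = c * b := by
  let H := Subgroup.centralizer ({a} : Set (FreeGroup α))
  have haH : a ∈ H := Subgroup.mem_centralizer_iff.mpr (by rintro g rfl; rfl)
  have hbH : b ∈ H := Subgroup.mem_centralizer_iff.mpr (by rintro g rfl; exact hab)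
  have hcH : c ∈ H := Subgroup.mem_centralizer_iff.mpr (by rintro g rfl; exact hac)
  have hz : ∀ g : H, (⟨a, haH⟩ : H) * g = g * (⟨a, haH⟩ : H) := by
    rintro ⟨g, hg⟩
    have := Subgroup.mem_centralizer_iff.mp hg a rfl
    exact Subtype.ext this
  have hz1 : (⟨a, haH⟩ : H) ≠ 1 := fun hh => ha (congrArg Subtype.val hh)
  have := isFreeGroup_abelian_of_central hz1 hz ⟨b, hbH⟩ ⟨c, hcH⟩
  exact congrArg Subtype.val this

open scoped commutatorElement

theorem commutator_weak_identity_free {α : Type*} (x y : α) (hxy : x ≠ y)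
    (ρ : FreeGroup α × FreeGroup α →* FreeGroup α) :
    ⁅ρ (FreeGroup.of x, 1), ρ (FreeGroup.of y, 1)⁆ = 1 ∨
      ⁅ρ (1, FreeGroup.of x), ρ (1, FreeGroup.of y)⁆ = 1 := by
  have key : ∀ g h : FreeGroup α, ρ (g, 1) * ρ (1, h) = ρ (1, h) * ρ (g, 1) := by
    intro g h
    rw [← map_mul, ← map_mul, Prod.mk_mul_mk, Prod.mk_mul_mk, one_mul, mul_one, one_mul, mul_one]
  by_cases h1 : ρ (FreeGroup.of x, 1) = 1
  · left
    rw [h1, commutatorElement_one_left]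
  · right
    rw [commutatorElement_eq_one_iff_commute]
    exact freeGroup_comm_trans h1 (key _ _) (key _ _)
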